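/- Let G be a non-bipartite graph and r a non-negative integer. Then (G^{−1/(2r+1)})^{2r+1} and G are homomorphically equivalent. -/

import Mathlib

structure UGraph where
  V : Type
  Adj : V → V → Prop
  symm : ∀ u v, Adj u v → Adj v u

namespace UGraph

/-- There is a walk of length exactly `n` from `u` to `v`. -/
def walkLen (G : UGraph) : ℕ → G.V → G.V → Prop
  | 0, u, v => u = v
  | n+1, u, v => ∃ w, G.Adj u w ∧ G.walkLen n w v

theorem walkLen_concat (G : UGraph) : ∀ (n : ℕ) (u v w : G.V),
    G.walkLen n u v → G.Adj v w → G.walkLen (n+1) u w := by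
  intro n
  induction n with
  | zero =>
      intro u v w h hadj
      cases h
      exact ⟨w, hadj, rfl⟩
  | succ n ih =>
      rintro u v w ⟨x, hux, hxv⟩ hadj
      exact ⟨x, hux, ih x v w hxv hadj⟩

theorem walkLen_symm (G : UGraph) : ∀ (n : ℕ) (u v : G.V),
    G.walkLen n u v → G.walkLen n v u := by
  intro n
  induction n with
  | zero => intro u v h; exact h.symm
  | succ n ih =>
      rintro u v ⟨w, huw, hwv⟩
      exact G.walkLen_concat n v w u (ih w v hwv) (G.symm u w huw)

/-- The `k`-th power of a graph: same vertices, adjacency = existence of a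
walk of length exactly `k` (loops allowed). -/
def pow (G : UGraph) (k : ℕ) : UGraph where
  V := G.V
  Adj u v := G.walkLen k u v
  symm := G.walkLen_symm k

/-- Existence of a graph homomorphism. -/
def homTo (G H : UGraph) : Prop :=
  ∃ f : G.V → H.V, ∀ u v, G.Adj u v → H.Adj (f u) (f v)

/-- The `(2s+1)`-subdivision `S_{2s+1}(G)`: every edge is replaced by a path
of length `2s+1`.  Following the paper's notation, the ordered pair `(u,v)`
(with `u ~ v`) carries the `s` inner vertices `(uv)_1, …, (uv)_s`. -/
def subdiv (G : UGraph) (s : ℕ) : UGraph where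
  V := G.V ⊕ ({p : G.V × G.V // G.Adj p.1 p.2} × Fin s)
  Adj x y :=
    match x, y with
    | Sum.inl u, Sum.inl v => s = 0 ∧ G.Adj u v
    | Sum.inl u, Sum.inr (e, k) => u = e.1.2 ∧ (k : ℕ) = s - 1
    | Sum.inr (e, k), Sum.inl u => u = e.1.2 ∧ (k : ℕ) = s - 1
    | Sum.inr (e, k), Sum.inr (e', l) =>
        e'.1.1 = e.1.2 ∧ e'.1.2 = e.1.1 ∧
        ((k : ℕ) + (l : ℕ) + 2 = s ∨ (k : ℕ) + (l : ℕ) + 2 = s + 1)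
  symm := by
    rintro (u | ⟨e, k⟩) (v | ⟨e', l⟩) h
    · exact ⟨h.1, G.symm _ _ h.2⟩
    · exact h
    · exact h
    · obtain ⟨h1, h2, h3⟩ := h
      exact ⟨h2.symm, h1.symm, by omega⟩

/-- `q < og(G)`: the rational `q` is smaller than the odd girth of `G`
(the length of a shortest odd closed walk; vacuously true if `G` is bipartite). -/
def ltOddGirth (G : UGraph) (q : ℚ) : Prop :=
  ∀ n : ℕ, Odd n → (∃ v, G.walkLen n v v) → q < (n : ℚ)

/-- A graph is non-bipartite iff it contains an odd closed walk. -/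
def Nonbipartite (G : UGraph) : Prop :=
  ∃ (n : ℕ) (v : G.V), Odd n ∧ G.walkLen n v v

/-- The odd girth, as an extended natural number (`⊤` for bipartite graphs). -/
noncomputable def oddGirth (G : UGraph) : ℕ∞ :=
  sInf {N : ℕ∞ | ∃ n : ℕ, N = (n : ℕ∞) ∧ Odd n ∧ ∃ v, G.walkLen n v v}

/-- The complete graph on `m` vertices. -/
def completeGraph (m : ℕ) : UGraph :=
  ⟨Fin m, fun u v => u ≠ v, fun _ _ h => h.symm⟩

/-- The chromatic number: least `m` such that `G` maps homomorphically to `K_m`. -/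
noncomputable def chromatic (G : UGraph) : ℕ :=
  sInf {m : ℕ | G.homTo (completeGraph m)}

/-- The `i`-th power thickness
`θ_i(G) = sup { (2r+1)/(2s+1) | χ(G^{(2r+1)/(2s+1)}) ≤ χ(G)+i, (2r+1)/(2s+1) < og(G) }`. -/
noncomputable def powerThickness (G : UGraph) (i : ℤ) : ℝ :=
  sSup {x : ℝ | ∃ r s : ℕ, x = (2*(r:ℝ)+1)/(2*(s:ℝ)+1) ∧
    ((((G.subdiv s).pow (2*r+1)).chromatic : ℤ) ≤ (G.chromatic : ℤ) + i) ∧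
    G.ltOddGirth ((2*(r:ℚ)+1)/(2*(s:ℚ)+1))}

/-- The graph `H^{-1/(2r+1)}`. -/
def negPow (H : UGraph) (r : ℕ) : UGraph where
  V := {A : Fin (r+1) → Set H.V //
        (∃ v, A 0 = {v}) ∧
        ∀ i : Fin (r+1), (A i).Nonempty ∧ A i ⊆ {u | ∃ v ∈ A 0, H.walkLen i v u}}
  Adj A B :=
    (∀ i j : Fin (r+1), (j : ℕ) = (i : ℕ) + 1 → A.1 i ⊆ B.1 j ∧ B.1 i ⊆ A.1 j) ∧
    ∀ j : Fin (r+1), ∀ a ∈ A.1 j, ∀ b ∈ B.1 j, H.Adj a b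
  symm := by
    rintro A B ⟨h1, h2⟩
    exact ⟨fun i j hij => ⟨(h1 i j hij).2, (h1 i j hij).1⟩,
           fun j b hb a ha => H.symm _ _ (h2 j a ha b hb)⟩

/-- The circular complete graph `K_{n/d}`. -/
def circGraph (n d : ℕ) : UGraph where
  V := Fin n
  Adj u v := (d : ℤ) ≤ |(u : ℤ) - (v : ℤ)| ∧ |(u : ℤ) - (v : ℤ)| ≤ (n : ℤ) - d
  symm := by
    intro u v h
    rwa [abs_sub_comm]

/-- The circular chromatic number, as a real number. -/
noncomputable def circChrom (G : UGraph) : ℝ :=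
  sInf {x : ℝ | ∃ n d : ℕ, 0 < d ∧ 2 * d ≤ n ∧ Nat.gcd n d = 1 ∧
    x = (n : ℝ) / (d : ℝ) ∧ G.homTo (circGraph n d)}

/-- The cycle on `m` vertices. -/
def cycleGraph (m : ℕ) : UGraph :=
  ⟨ZMod m, fun i j => i = j + 1 ∨ j = i + 1, fun _ _ h => h.symm⟩

/-- UGraph isomorphism. -/
def Isom (G H : UGraph) : Prop :=
  ∃ f : G.V ≃ H.V, ∀ u v, G.Adj u v ↔ H.Adj (f u) (f v)

/-- The helical graph `H(m,n,k)`. -/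
def helical (m n k : ℕ) : UGraph where
  V := {A : Fin k → Set (Fin m) //
        (∀ h : 0 < k, (A ⟨0, h⟩).ncard = n) ∧
        (∀ i, n ≤ (A i).ncard) ∧
        (∀ i : Fin k, ∀ h : (i : ℕ) + 1 < k, A i ∩ A ⟨(i : ℕ) + 1, h⟩ = ∅) ∧
        (∀ i : Fin k, ∀ h : (i : ℕ) + 2 < k, A i ⊆ A ⟨(i : ℕ) + 2, h⟩)}
  Adj A B :=
    (∀ i, A.1 i ∩ B.1 i = ∅) ∧
    (∀ i : Fin k, ∀ h : (i : ℕ) + 1 < k,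
      A.1 i ⊆ B.1 ⟨(i : ℕ) + 1, h⟩ ∧ B.1 i ⊆ A.1 ⟨(i : ℕ) + 1, h⟩)
  symm := by
    rintro A B ⟨h1, h2⟩
    refine ⟨fun i => ?_, fun i h => ⟨(h2 i h).2, (h2 i h).1⟩⟩
    rw [Set.inter_comm]
    exact h1 i

/-- A graph with chromatic number `k` is colorful if every proper `k`-coloring
admits a (nonempty) induced subgraph all of whose vertices see all `k` colors in
their closed neighborhood. -/
def Colorful (G : UGraph) : Prop :=
  ∀ c : G.V → Fin G.chromatic, (∀ u v, G.Adj u v → c u ≠ c v) →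
    ∃ S : Set G.V, S.Nonempty ∧
      ∀ v ∈ S, ∀ col : Fin G.chromatic,
        ∃ u ∈ S, (u = v ∨ G.Adj v u) ∧ c u = col

end UGraph

namespace UGraph

theorem walkLen_odd_adj (G : UGraph) : ∀ (t : ℕ) (a b : G.V), G.Adj a b →
    G.walkLen (2*t+1) a b := by
  intro t
  induction t with
  | zero => intro a b h; exact ⟨b, h, rfl⟩
  | succ t ih =>
      intro a b h
      have h2 : G.walkLen (2*t+1+1+1) a b := ⟨b, h, a, G.symm a b h, ih a b h⟩
      rwa [show 2*t+1+1+1 = 2*(t+1)+1 by ring] at h2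

theorem walkLen_odd' (G : UGraph) (i : ℕ) (hi : i % 2 = 1) (a b : G.V) (h : G.Adj a b) :
    G.walkLen i a b := by
  obtain ⟨t, rfl⟩ : ∃ t, i = 2*t+1 := ⟨i/2, by omega⟩
  exact G.walkLen_odd_adj t a b h

theorem walkLen_even_closed (G : UGraph) (i : ℕ) (hi : i % 2 = 0) (a b : G.V) (h : G.Adj a b) :
    G.walkLen i a a := by
  rcases Nat.eq_zero_or_pos i with h0 | h0
  · subst h0; rfl
  · rw [show i = (i-1)+1 by omega]
    exact ⟨b, h, G.walkLen_odd' (i-1) (by omega) b a (G.symm a b h)⟩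

theorem walkLen_even_nbr (G : UGraph) (i : ℕ) (hi : i % 2 = 0) (h1 : 0 < i) (b a x : G.V)
    (hba : G.Adj b a) (hax : G.Adj a x) : G.walkLen i b x := by
  rw [show i = (i-1)+1 by omega]
  exact ⟨a, hba, G.walkLen_odd' (i-1) (by omega) a x hax⟩

theorem walkLen_chain (G : UGraph) (g : ℕ → G.V) :
    ∀ n, (∀ j, j < n → G.Adj (g j) (g (j+1))) → G.walkLen n (g 0) (g n) := by
  intro n
  induction n with
  | zero => intro _; rfl
  | succ n ih =>
      intro h
      exact G.walkLen_concat n (g 0) (g n) (g (n+1))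
        (ih (fun j hj => h j (by omega))) (h n (by omega))

theorem walkLen_split (G : UGraph) : ∀ (m n : ℕ) (u v : G.V),
    G.walkLen (m+n) u v → ∃ w, G.walkLen m u w ∧ G.walkLen n w v := by
  intro m
  induction m with
  | zero => intro n u v h; exact ⟨u, rfl, by rwa [Nat.zero_add] at h⟩
  | succ m ih =>
      intro n u v h
      have h' : G.walkLen ((m+n)+1) u v := by rwa [show m+1+n = m+n+1 by omega] at h
      obtain ⟨w, hw, hwv⟩ := h'
      obtain ⟨x, hx1, hx2⟩ := ih n w v hwv
      exact ⟨x, ⟨w, hw, hx1⟩, hx2⟩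

theorem negPow_spread (G : UGraph) (r : ℕ) :
    ∀ (k : ℕ) (A B : (G.negPow r).V), (G.negPow r).walkLen k A B →
      ∀ (i : ℕ) (h : i + k ≤ r), A.1 ⟨i, by omega⟩ ⊆ B.1 ⟨i + k, by omega⟩ := by
  intro k
  induction k with
  | zero =>
      intro A B h i hi
      have hAB : A = B := h
      subst hAB
      exact fun x hx => hx
  | succ k ih =>
      rintro A B ⟨M, hAM, hMB⟩ i hi
      have h1 := (hAM.1 ⟨i, by omega⟩ ⟨i+1, by omega⟩ rfl).1
      have h2 := ih M B hMB (i+1) (by omega)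
      have e : (⟨(i+1) + k, by omega⟩ : Fin (r+1)) = ⟨i + (k+1), by omega⟩ := by
        simp only [Fin.mk.injEq]; omega
      rw [e] at h2
      exact fun x hx => h2 (h1 hx)

/-- Alternating sequence `u, v, u, v, …`. -/
def par (G : UGraph) (u v : G.V) (m : ℕ) : G.V := if m % 2 = 0 then u else v

theorem par_even (G : UGraph) (u v : G.V) {m : ℕ} (h : m % 2 = 0) : G.par u v m = u := by
  simp [par, h]

theorem par_odd (G : UGraph) (u v : G.V) {m : ℕ} (h : m % 2 = 1) : G.par u v m = v := by
  simp [par, h]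

theorem par_congr (G : UGraph) (u v : G.V) {a b : ℕ} (h : a % 2 = b % 2) :
    G.par u v a = G.par u v b := by
  simp only [par, h]

theorem par_adj (G : UGraph) {u v : G.V} (huv : G.Adj u v) (m : ℕ) :
    G.Adj (G.par u v m) (G.par u v (m+1)) := by
  rcases Nat.mod_two_eq_zero_or_one m with h | h
  · rw [G.par_even u v (by omega : m % 2 = 0), G.par_odd u v (by omega : (m+1) % 2 = 1)]
    exact huv
  · rw [G.par_odd u v (by omega : m % 2 = 1), G.par_even u v (by omega : (m+1) % 2 = 0)]
    exact G.symm u v huv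

theorem par_walk (G : UGraph) {u v : G.V} (huv : G.Adj u v) (n m : ℕ) :
    G.walkLen n (G.par u v m) (G.par u v (m+n)) := by
  have := G.walkLen_chain (fun j => G.par u v (m+j)) n
    (fun j _ => by simpa [← Nat.add_assoc] using G.par_adj huv (m+j))
  simpa using this

/-- The sets along the canonical walk of length `2r+1` associated to an edge `uv`. -/
def eset (G : UGraph) (r : ℕ) (u v : G.V) (k i : ℕ) : Set G.V :=
  if (k ≤ r ∧ (i ≤ k ∨ (k+i) % 2 = 0)) ∨ (r < k ∧ (i ≤ 2*r+1-k ∨ (k+i) % 2 = 1))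
  then {G.par u v (k+i)}
  else if k ≤ r then {x | G.Adj u x} else {x | G.Adj v x}

theorem eset_zero (G : UGraph) (r : ℕ) (u v : G.V) (k : ℕ) :
    G.eset r u v k 0 = {G.par u v k} := by
  unfold eset
  rw [if_pos (by omega)]
  rfl

theorem eset_valid (G : UGraph) (r : ℕ) {u v : G.V} (huv : G.Adj u v) (k i : ℕ) :
    (G.eset r u v k i).Nonempty ∧
      G.eset r u v k i ⊆ {x | ∃ w ∈ G.eset r u v k 0, G.walkLen i w x} := by
  rw [G.eset_zero r u v k]
  unfold eset
  split_ifs with h1 h2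
  · refine ⟨⟨G.par u v (k+i), rfl⟩, ?_⟩
    intro x hx
    rw [Set.mem_singleton_iff] at hx
    subst hx
    exact ⟨G.par u v k, rfl, G.par_walk huv i k⟩
  · -- N(u) case : k ≤ r, i > k, (k+i) % 2 = 1
    refine ⟨⟨v, huv⟩, ?_⟩
    intro x hx
    refine ⟨G.par u v k, rfl, ?_⟩
    rcases Nat.mod_two_eq_zero_or_one k with hk | hk
    · rw [G.par_even u v (by omega : k % 2 = 0)]
      exact G.walkLen_odd' i (by omega) u x hx
    · rw [G.par_odd u v (by omega : k % 2 = 1)]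
      exact G.walkLen_even_nbr i (by omega) (by omega) v u x (G.symm u v huv) hx
  · -- N(v) case : r < k, i > 2r+1-k, (k+i) % 2 = 0
    refine ⟨⟨u, G.symm u v huv⟩, ?_⟩
    intro x hx
    refine ⟨G.par u v k, rfl, ?_⟩
    rcases Nat.mod_two_eq_zero_or_one k with hk | hk
    · rw [G.par_even u v (by omega : k % 2 = 0)]
      exact G.walkLen_even_nbr i (by omega) (by omega) u v x huv hx
    · rw [G.par_odd u v (by omega : k % 2 = 1)]
      exact G.walkLen_odd' i (by omega) v x hx

/-- The vertices of `negPow G r` along the canonical walk. -/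
def evert (G : UGraph) (r : ℕ) {u v : G.V} (huv : G.Adj u v) (k : ℕ) : (G.negPow r).V :=
  ⟨fun i => G.eset r u v k (i : ℕ), by
    constructor
    · exact ⟨G.par u v k, by simp only [Fin.val_zero]; exact G.eset_zero r u v k⟩
    · intro i
      have h := G.eset_valid r huv k (i : ℕ)
      refine ⟨h.1, ?_⟩
      simp only [Fin.val_zero]
      exact h.2⟩

theorem eset_incl1 (G : UGraph) (r : ℕ) {u v : G.V} (huv : G.Adj u v) (k i : ℕ)
    (hk : k + 1 ≤ 2*r+1) (hi : i + 1 ≤ r) :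
    G.eset r u v k i ⊆ G.eset r u v (k+1) (i+1) := by
  unfold eset
  split_ifs with h1 h2 h3 h4 h5
  · rw [show G.par u v (k+i) = G.par u v (k+1+(i+1)) from G.par_congr u v (by omega)]
  · -- singleton ⊆ N(u) : impossible
    exfalso; omega
  · -- singleton ⊆ N(v) : the case i = 2r-k, k > r
    intro x hx
    rw [Set.mem_singleton_iff] at hx
    subst hx
    show G.Adj v (G.par u v (k+i))
    rw [G.par_even u v (by omega : (k+i) % 2 = 0)]
    exact G.symm u v huv
  · exfalso; omega
  · exact fun x hx => hx
  · exfalso; omega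
  · exfalso; omega
  · exfalso; omega
  · exact fun x hx => hx

theorem eset_incl2 (G : UGraph) (r : ℕ) {u v : G.V} (huv : G.Adj u v) (k i : ℕ)
    (hk : k + 1 ≤ 2*r+1) (hi : i + 1 ≤ r) :
    G.eset r u v (k+1) i ⊆ G.eset r u v k (i+1) := by
  unfold eset
  split_ifs with h1 h2 h3 h4 h5
  · rw [show G.par u v (k+1+i) = G.par u v (k+(i+1)) from G.par_congr u v (by omega)]
  · -- singleton ⊆ N(u) : the case i = k, k+1 ≤ r
    intro x hx
    rw [Set.mem_singleton_iff] at hx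
    subst hx
    show G.Adj u (G.par u v (k+1+i))
    rw [G.par_odd u v (by omega : (k+1+i) % 2 = 1)]
    exact huv
  · exfalso; omega
  · exfalso; omega
  · exact fun x hx => hx
  · exfalso; omega
  · exfalso; omega
  · exfalso; omega
  · exact fun x hx => hx

theorem eset_complete (G : UGraph) (r : ℕ) {u v : G.V} (huv : G.Adj u v) (k j : ℕ)
    (hk : k + 1 ≤ 2*r+1) (hj : j ≤ r) :
    ∀ a ∈ G.eset r u v k j, ∀ b ∈ G.eset r u v (k+1) j, G.Adj a b := by
  intro a ha b hb
  unfold eset at ha hb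
  split_ifs at ha hb with h1 h2 h3 h4 h5
  · rw [Set.mem_singleton_iff] at ha hb
    subst ha; subst hb
    rw [show G.par u v (k+1+j) = G.par u v (k+j+1) from G.par_congr u v (by omega)]
    exact G.par_adj huv (k+j)
  · -- a singleton, b ∈ N(u) : then (k+1+j)%2 = 1 so (k+j)%2=0, a = u
    rw [Set.mem_singleton_iff] at ha
    subst ha
    rw [G.par_even u v (by omega : (k+j) % 2 = 0)]
    exact hb
  · -- a singleton, b ∈ N(v) : (k+1+j)%2 = 0 so (k+j)%2=1, a = v
    rw [Set.mem_singleton_iff] at ha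
    subst ha
    rw [G.par_odd u v (by omega : (k+j) % 2 = 1)]
    exact hb
  · -- a ∈ N(u), b singleton : (k+j)%2=1 so (k+1+j)%2=0, b = u
    rw [Set.mem_singleton_iff] at hb
    subst hb
    rw [G.par_even u v (by omega : (k+1+j) % 2 = 0)]
    exact G.symm u a ha
  · exfalso; omega
  · exfalso; omega
  · -- a ∈ N(v), b singleton : (k+j)%2=0 so (k+1+j)%2=1, b = v
    rw [Set.mem_singleton_iff] at hb
    subst hb
    rw [G.par_odd u v (by omega : (k+1+j) % 2 = 1)]
    exact G.symm v a ha
  · exfalso; omega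
  · exfalso; omega

theorem evert_adj (G : UGraph) (r : ℕ) {u v : G.V} (huv : G.Adj u v) (k : ℕ)
    (hk : k + 1 ≤ 2*r+1) :
    (G.negPow r).Adj (G.evert r huv k) (G.evert r huv (k+1)) := by
  constructor
  · intro i j hij
    have hi : (i : ℕ) + 1 ≤ r := by
      have := j.isLt
      omega
    constructor
    · show G.eset r u v k (i : ℕ) ⊆ G.eset r u v (k+1) (j : ℕ)
      rw [hij]
      exact G.eset_incl1 r huv k (i : ℕ) hk hi
    · show G.eset r u v (k+1) (i : ℕ) ⊆ G.eset r u v k (j : ℕ)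
      rw [hij]
      exact G.eset_incl2 r huv k (i : ℕ) hk hi
  · intro j a ha b hb
    exact G.eset_complete r huv k (j : ℕ) hk (by omega) a ha b hb

/-- The image of a (non-isolated) vertex under the homomorphism
`G → (G^{-1/(2r+1)})^{2r+1}`. -/
def fvert (G : UGraph) (r : ℕ) (w : G.V) (hw : ∃ x, G.Adj w x) : (G.negPow r).V :=
  ⟨fun i => if (i : ℕ) % 2 = 0 then {w} else {x | G.Adj w x}, by
    obtain ⟨x, hx⟩ := hw
    constructor
    · exact ⟨w, by simp⟩
    · intro i
      have h0 : w ∈ (fun (i : Fin (r+1)) =>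
          if (i : ℕ) % 2 = 0 then ({w} : Set G.V) else {x | G.Adj w x}) 0 := by simp
      refine ⟨?_, ?_⟩
      · show (if (i : ℕ) % 2 = 0 then ({w} : Set G.V) else {x | G.Adj w x}).Nonempty
        split_ifs with h
        · exact ⟨w, rfl⟩
        · exact ⟨x, hx⟩
      · intro y hy
        refine ⟨w, h0, ?_⟩
        show G.walkLen (i : ℕ) w y
        have hy' : y ∈ (if (i : ℕ) % 2 = 0 then ({w} : Set G.V) else {x | G.Adj w x}) := hy
        by_cases h : (i : ℕ) % 2 = 0
        · rw [if_pos h, Set.mem_singleton_iff] at hy'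
          rw [hy']
          exact G.walkLen_even_closed (i : ℕ) h w x hx
        · rw [if_neg h] at hy'
          exact G.walkLen_odd' (i : ℕ) (by omega) w y hy'⟩

theorem evert_zero (G : UGraph) (r : ℕ) {u v : G.V} (huv : G.Adj u v) :
    G.evert r huv 0 = G.fvert r u ⟨v, huv⟩ := by
  apply Subtype.ext
  funext i
  show G.eset r u v 0 (i : ℕ) = if (i : ℕ) % 2 = 0 then {u} else {x | G.Adj u x}
  unfold eset
  split_ifs
  all_goals first
    | rfl
    | (exfalso; omega)
    | (rw [G.par_even u v (by omega)])

theorem evert_last (G : UGraph) (r : ℕ) {u v : G.V} (huv : G.Adj u v) :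
    G.evert r huv (2*r+1) = G.fvert r v ⟨u, G.symm u v huv⟩ := by
  apply Subtype.ext
  funext i
  show G.eset r u v (2*r+1) (i : ℕ) = if (i : ℕ) % 2 = 0 then {v} else {x | G.Adj v x}
  unfold eset
  split_ifs
  all_goals first
    | rfl
    | (exfalso; omega)
    | (rw [G.par_odd u v (by omega)])

end UGraph

open UGraph
/-- For non-bipartite `G`, `(G^{-1/(2r+1)})^{2r+1} ↔ G`. -/
theorem negPow_pow_hom_equiv (G : UGraph) (hG : G.Nonbipartite) (r : ℕ) :
    ((G.negPow r).pow (2 * r + 1)).homTo G ∧ G.homTo ((G.negPow r).pow (2 * r + 1)) := by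
  constructor
  · -- the homomorphism `(G^{-1/(2r+1)})^{2r+1} → G`
    refine ⟨fun A => A.2.1.choose, ?_⟩
    intro A B hAB
    have hw : (G.negPow r).walkLen (2*r+1) A B := hAB
    rw [show 2*r+1 = r + (r+1) by ring] at hw
    obtain ⟨M, hAM, hMB⟩ := (G.negPow r).walkLen_split r (r+1) A B hw
    have hMB' : ∃ M', (G.negPow r).Adj M M' ∧ (G.negPow r).walkLen r M' B := hMB
    obtain ⟨M', hMM', hM'B⟩ := hMB'
    set ca := A.2.1.choose with hca
    set cb := B.2.1.choose with hcb
    have hu : A.1 0 = {ca} := A.2.1.choose_spec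
    have hv : B.1 0 = {cb} := B.2.1.choose_spec
    have h0 : (0 : Fin (r+1)) = ⟨0, by omega⟩ := by
      apply Fin.ext; simp
    have e : (⟨0 + r, by omega⟩ : Fin (r+1)) = ⟨r, by omega⟩ := Fin.ext (by simp)
    have hA : A.1 ⟨0, by omega⟩ ⊆ M.1 ⟨0 + r, by omega⟩ :=
      G.negPow_spread r r A M hAM 0 (by omega)
    have hB : B.1 ⟨0, by omega⟩ ⊆ M'.1 ⟨0 + r, by omega⟩ :=
      G.negPow_spread r r B M' ((G.negPow r).walkLen_symm r M' B hM'B) 0 (by omega)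
    rw [e] at hA hB
    have hmemA : ca ∈ A.1 0 := by rw [hu]; rfl
    have hmemB : cb ∈ B.1 0 := by rw [hv]; rfl
    have hmemA' : ca ∈ A.1 ⟨0, by omega⟩ :=
      Eq.mp (congrArg (fun s => ca ∈ s) (congrArg A.1 h0)) hmemA
    have hmemB' : cb ∈ B.1 ⟨0, by omega⟩ :=
      Eq.mp (congrArg (fun s => cb ∈ s) (congrArg B.1 h0)) hmemB
    exact hMM'.2 ⟨r, by omega⟩ ca (hA hmemA') cb (hB hmemB')
  · -- the homomorphism `G → (G^{-1/(2r+1)})^{2r+1}`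
    classical
    obtain ⟨n, w0, hodd, hwalk⟩ := hG
    have hn : n % 2 = 1 := Nat.odd_iff.mp hodd
    have hw0 : ∃ x, G.Adj w0 x := by
      rcases n with _ | m
      · omega
      · obtain ⟨x, hx, -⟩ := hwalk
        exact ⟨x, hx⟩
    refine ⟨fun w => if h : ∃ x, G.Adj w x then G.fvert r w h else G.fvert r w0 hw0, ?_⟩
    intro u v huv
    beta_reduce
    change (G.negPow r).walkLen (2*r+1) (if h : ∃ x, G.Adj u x then G.fvert r u h else G.fvert r w0 hw0)
      (if h : ∃ x, G.Adj v x then G.fvert r v h else G.fvert r w0 hw0)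
    rw [dif_pos (⟨v, huv⟩ : ∃ x, G.Adj u x), dif_pos (⟨u, G.symm u v huv⟩ : ∃ x, G.Adj v x)]
    show (G.negPow r).walkLen (2*r+1) (G.fvert r u ⟨v, huv⟩) (G.fvert r v ⟨u, G.symm u v huv⟩)
    rw [← G.evert_zero r huv, ← G.evert_last r huv]
    exact (G.negPow r).walkLen_chain (fun k => G.evert r huv k) (2*r+1)
      (fun j hj => G.evert_adj r huv j (by omega))
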